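/- Let F be the pushforward of the semicircle law on [−2,2] under x ↦ x². Then for every real z > 4, the Stieltjes transform of F satisfies ∫ 1/(x − z) dF(x) = −1/2 + √(1/4 − 1/z). -/

import Mathlib

open MeasureTheory

/-- The semicircle law: the probability measure on `ℝ` with density
`(1/(2π))√(4-x²)` on `[-2,2]`. -/
noncomputable def semicircleLaw : Measure ℝ :=
  MeasureTheory.volume.withDensity fun x => ENNReal.ofReal ((2 * Real.pi)⁻¹ * Real.sqrt (4 - x ^ 2))

set_option maxHeartbeats 1000000 in
theorem stieltjes_transform_squared_semicircle (z : ℝ) (hz : 4 < z) :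
    ∫ x, (x - z)⁻¹ ∂(semicircleLaw.map fun x : ℝ => x ^ 2)
      = -(1 / 2) + Real.sqrt (1 / 4 - 1 / z) := by
  have hz0 : (0:ℝ) < z := by linarith
  have hπ : (0:ℝ) < Real.pi := Real.pi_pos
  set k : ℝ := Real.sqrt ((z - 4) / z) with hkdef
  have hk2 : k ^ 2 = (z - 4) / z := Real.sq_sqrt (div_nonneg (by linarith) (by linarith))
  have hkpos : 0 < k := Real.sqrt_pos.mpr (div_pos (by linarith) hz0)
  set ρ : ℝ → ℝ := fun x => (2 * Real.pi)⁻¹ * Real.sqrt (4 - x ^ 2) with hρdef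
  have hρ0 : ∀ x, 0 ≤ ρ x := fun x => mul_nonneg (by positivity) (Real.sqrt_nonneg _)
  have hρmeas : Measurable ρ :=
    (measurable_const.mul ((measurable_const.sub (measurable_id.pow_const 2)).sqrt))
  -- Step 1: pull back through the map
  rw [MeasureTheory.integral_map (μ := semicircleLaw) (φ := fun x : ℝ => x ^ 2)
      (f := fun x : ℝ => (x - z)⁻¹)
      (by fun_prop)
      (((measurable_id.sub_const z).inv).aestronglyMeasurable)]
  -- Step 2: unfold the density
  rw [show semicircleLaw
        = MeasureTheory.volume.withDensity fun x => ((Real.toNNReal (ρ x) : NNReal) : ENNReal) from rfl,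
    integral_withDensity_eq_integral_smul (f := fun x => Real.toNNReal (ρ x))
      (by exact measurable_real_toNNReal.comp hρmeas) (fun x : ℝ => (x ^ 2 - z)⁻¹)]
  have hsmul : ∀ x : ℝ, (Real.toNNReal (ρ x)) • ((x ^ 2 - z)⁻¹ : ℝ) = ρ x * (x ^ 2 - z)⁻¹ := by
    intro x
    simp [NNReal.smul_def, Real.coe_toNNReal _ (hρ0 x)]
  simp only [hsmul]
  -- Step 3: restrict to [-2,2]
  rw [← MeasureTheory.setIntegral_eq_integral_of_forall_compl_eq_zero
      (s := Set.Icc (-2:ℝ) 2) (by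
        intro x hx
        have : 4 - x ^ 2 ≤ 0 := by
          rcases lt_or_ge x (-2) with h | h
          · nlinarith [Set.mem_Icc.not.mp hx]
          · have h2 : 2 < x := by
              by_contra hc
              exact hx (Set.mem_Icc.mpr ⟨h, le_of_not_gt hc⟩)
            nlinarith
        simp [hρdef, Real.sqrt_eq_zero_of_nonpos this])]
  rw [MeasureTheory.integral_Icc_eq_integral_Ioc,
    ← intervalIntegral.integral_of_le (by norm_num : (-2:ℝ) ≤ 2)]
  -- Step 4: FTC with explicit antiderivative
  set G : ℝ → ℝ := fun x =>
    (2 * Real.pi)⁻¹ * (k * Real.arcsin (k * x / (2 * Real.sqrt (1 - x ^ 2 / z)))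
      - Real.arcsin (x / 2)) with hGdef
  have key : ∫ x in (-2:ℝ)..2, ρ x * (x ^ 2 - z)⁻¹ = G 2 - G (-2) := by
    apply intervalIntegral.integral_eq_sub_of_hasDeriv_right_of_le (by norm_num)
    · -- continuity of G on Icc
      apply ContinuousOn.mul continuousOn_const
      apply ContinuousOn.sub
      · apply ContinuousOn.mul continuousOn_const
        apply Real.continuous_arcsin.comp_continuousOn
        apply ContinuousOn.div (continuousOn_const.mul continuousOn_id)
        · exact continuousOn_const.mul
            ((continuousOn_const.sub ((continuousOn_id.pow 2).div_const z)).sqrt)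
        · intro x hx
          have hx4 : x ^ 2 ≤ 4 := by
            rcases Set.mem_Icc.mp hx with ⟨h1, h2⟩; nlinarith
          have : 0 < 1 - x ^ 2 / z := by
            rw [sub_pos, div_lt_one hz0]; linarith
          positivity
      · exact Real.continuous_arcsin.comp_continuousOn (continuousOn_id.div_const 2)
    · -- derivative on Ioo
      intro x hx
      obtain ⟨hx1, hx2⟩ := hx
      have hx4 : x ^ 2 < 4 := by nlinarith
      have hv : 0 < 1 - x ^ 2 / z := by rw [sub_pos, div_lt_one hz0]; linarith
      set w : ℝ := Real.sqrt (1 - x ^ 2 / z) with hwdef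
      have hw : 0 < w := Real.sqrt_pos.mpr hv
      have hw2 : w ^ 2 = 1 - x ^ 2 / z := Real.sq_sqrt hv.le
      set A : ℝ := Real.sqrt (4 - x ^ 2) with hAdef
      have hA : 0 < A := Real.sqrt_pos.mpr (by linarith)
      have hA2 : A ^ 2 = 4 - x ^ 2 := Real.sq_sqrt (by linarith)
      have hzx : x ^ 2 - z ≠ 0 := by nlinarith
      -- derivative of the inner function u
      have hvne : 1 - x ^ 2 / z ≠ 0 := hv.ne'
      have hvder : HasDerivAt (fun y : ℝ => 1 - y ^ 2 / z) (-(2 * x / z)) x := by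
        have := ((hasDerivAt_pow 2 x).div_const z).const_sub 1
        simpa using this
      have hwder : HasDerivAt (fun y : ℝ => Real.sqrt (1 - y ^ 2 / z))
          (-(2 * x / z) / (2 * w)) x := hvder.sqrt hvne
      have huder : HasDerivAt (fun y : ℝ => k * y / (2 * Real.sqrt (1 - y ^ 2 / z)))
          (k / (2 * w ^ 3)) x := by
        have hd : HasDerivAt (fun y : ℝ => 2 * Real.sqrt (1 - y ^ 2 / z))
            (2 * (-(2 * x / z) / (2 * w))) x := hwder.const_mul 2
        have hn : HasDerivAt (fun y : ℝ => k * y) k x := by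
          simpa using (hasDerivAt_id x).const_mul k
        have := hn.div hd (by positivity)
        refine this.congr_deriv ?_
        symm
        rw [← hwdef]
        rw [div_eq_div_iff (by positivity) (by positivity)]
        have hzz : z * z⁻¹ = 1 := mul_inv_cancel₀ hz0.ne'
        field_simp [hz0.ne']
        linear_combination (-1 : ℝ) * (z * hw2 - x ^ 2 * hzz)
      -- u x and its bounds
      have huval : k * x / (2 * w) = k * x / (2 * w) := rfl
      have hu2 : 1 - (k * x / (2 * w)) ^ 2 = (A / (2 * w)) ^ 2 := by
        rw [div_pow, div_pow, mul_pow, mul_pow, hk2, hw2, hA2]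
        have h44 : z * 4 - x ^ 2 * 4 ≠ 0 := by nlinarith
        have hD : (z * 4 - x ^ 2 * 4) * (z * 4 - x ^ 2 * 4)⁻¹ = 1 := mul_inv_cancel₀ h44
        field_simp [hz0.ne', hvne, h44]
        linear_combination (-4 : ℝ) * mul_inv_cancel₀ (show z - x ^ 2 ≠ 0 by nlinarith)
      have hune1 : k * x / (2 * w) ≠ 1 := by
        intro h
        have h0 : (1:ℝ) - (k * x / (2 * w)) ^ 2 = 0 := by rw [h]; ring
        rw [hu2] at h0
        exact pow_ne_zero 2 (by positivity : A / (2 * w) ≠ 0) h0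
      have hune1' : k * x / (2 * w) ≠ -1 := by
        intro h
        have h0 : (1:ℝ) - (k * x / (2 * w)) ^ 2 = 0 := by rw [h]; ring
        rw [hu2] at h0
        exact pow_ne_zero 2 (by positivity : A / (2 * w) ≠ 0) h0
      have harc1 : HasDerivAt (fun y : ℝ => Real.arcsin (k * y / (2 * Real.sqrt (1 - y ^ 2 / z))))
          (1 / Real.sqrt (1 - (k * x / (2 * w)) ^ 2) * (k / (2 * w ^ 3))) x :=
        HasDerivAt.comp (h₂ := Real.arcsin) x (Real.hasDerivAt_arcsin hune1' hune1) huder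
      have harc2 : HasDerivAt (fun y : ℝ => Real.arcsin (y / 2))
          (1 / Real.sqrt (1 - (x / 2) ^ 2) * (1 / 2)) x := by
        have h2 : x / 2 ≠ -1 := by intro h; rw [div_eq_iff (by norm_num : (2:ℝ) ≠ 0)] at h; linarith
        have h2' : x / 2 ≠ 1 := by intro h; rw [div_eq_iff (by norm_num : (2:ℝ) ≠ 0)] at h; linarith
        exact (Real.hasDerivAt_arcsin h2 h2').comp x ((hasDerivAt_id x).div_const 2)
      have hzx' : z - x ^ 2 ≠ 0 := by nlinarith
      have hG : HasDerivAt G (ρ x * (x ^ 2 - z)⁻¹) x := by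
        have := ((harc1.const_mul k).sub harc2).const_mul ((2 * Real.pi)⁻¹)
        refine this.congr_deriv ?_
        symm
        rw [hu2, Real.sqrt_sq (by positivity : (0:ℝ) ≤ A / (2 * w)),
          show (1:ℝ) - (x / 2) ^ 2 = (A / 2) ^ 2 by rw [div_pow, div_pow, hA2]; ring,
          Real.sqrt_sq (by positivity : (0:ℝ) ≤ A / 2)]
        have e1 : k * (1 / (A / (2 * w)) * (k / (2 * w ^ 3))) = (z - 4) / ((z - x ^ 2) * A) := by
          have h1 : k * (1 / (A / (2 * w)) * (k / (2 * w ^ 3))) = k ^ 2 / (A * w ^ 2) := by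
            field_simp
          have hw2' : w ^ 2 * z = z - x ^ 2 := by rw [hw2]; field_simp
          have hk2' : k ^ 2 * z = z - 4 := by rw [hk2]; field_simp
          rw [h1, div_eq_div_iff (mul_ne_zero hA.ne' (pow_ne_zero 2 hw.ne'))
            (mul_ne_zero hzx' hA.ne')]
          linear_combination (A * w ^ 2) * hk2' - (k ^ 2 * A) * hw2'
        have e2 : 1 / (A / 2) * (1 / 2 : ℝ) = 1 / A := by
          rw [one_div_div]
          ring
        rw [e1, e2]
        simp only [hρdef]
        rw [← hAdef]
        field_simp
        linear_combination (z - x ^ 2) * hA2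
      exact hG.hasDerivWithinAt
    · -- integrability
      apply ContinuousOn.intervalIntegrable
      apply ContinuousOn.mul
      · exact (continuous_const.mul
          ((continuous_const.sub (continuous_pow 2)).sqrt)).continuousOn
      · apply ContinuousOn.inv₀ ((continuousOn_id.pow 2).sub continuousOn_const)
        intro x hx
        have : x ∈ Set.Icc (-2:ℝ) 2 := by
          simpa [Set.uIcc_of_le (by norm_num : (-2:ℝ) ≤ 2)] using hx
        obtain ⟨h1, h2⟩ := this
        have : x ^ 2 ≤ 4 := by nlinarith
        simp only [Pi.sub_apply, Pi.pow_apply, id]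
        nlinarith
  rw [key]
  -- Step 5: evaluate the endpoints
  have hkk : Real.sqrt (1 - (2:ℝ) ^ 2 / z) = k := by
    rw [hkdef]; congr 1; field_simp; ring
  have hG2 : G 2 = (2 * Real.pi)⁻¹ * (k * (Real.pi / 2) - Real.pi / 2) := by
    rw [hGdef]
    simp only
    rw [hkk, show k * 2 / (2 * k) = 1 by field_simp, Real.arcsin_one,
      show (2:ℝ) / 2 = 1 by norm_num, Real.arcsin_one]
  have hGm2 : G (-2) = (2 * Real.pi)⁻¹ * (k * (-(Real.pi / 2)) + Real.pi / 2) := by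
    rw [hGdef]
    simp only
    rw [show ((-2:ℝ)) ^ 2 = (2:ℝ) ^ 2 by norm_num, hkk,
      show k * (-2) / (2 * k) = -1 by rw [div_eq_iff (by positivity : (2:ℝ) * k ≠ 0)]; ring,
      Real.arcsin_neg, Real.arcsin_one,
      show (-2:ℝ) / 2 = -1 by norm_num, Real.arcsin_neg, Real.arcsin_one]
    ring
  rw [hG2, hGm2]
  have hfin : Real.sqrt (1 / 4 - 1 / z) = k / 2 := by
    have h1 : (1:ℝ) / 4 - 1 / z = (k / 2) ^ 2 := by
      rw [div_pow, hk2, div_div,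
        div_sub_div _ _ (by norm_num : (4:ℝ) ≠ 0) hz0.ne']
      ring
    rw [h1, Real.sqrt_sq (by positivity)]
  rw [hfin]
  field_simp
  ring
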